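/- Let V be a subgroup of the finite group G, let P be a p-subgroup of G with P ≤ V, and let g ∈ V with g ∈ N_G(P). Suppose K is a normal subgroup of V which is a p-group and which is not contained in P. Then: (1) P ⊔ K is a p-subgroup of G normalized by g with P < P ⊔ K ≤ V, i.e. P ⊔ K lies in the poset (P,V]^⟨g⟩_{S_p} = {Q : Q a p-subgroup of G, P < Q ≤ V, g ∈ N_G(Q)}; (2) for every Q ∈ (P,V]^⟨g⟩_{S_p}, the subgroup Q ⊔ K again lies in (P,V]^⟨g⟩_{S_p}; and (3) for every Q ∈ (P,V]^⟨g⟩_{S_p} one has Q ≤ Q ⊔ K and P ⊔ K ≤ Q ⊔ K. (These data constitute the conical contraction of (P,V]^⟨g⟩_{S_p} used to prove that its reduced Euler characteristic vanishes.) -/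

import Mathlib

private lemma conj_map_eq {G : Type*} [Group G] {H : Subgroup G} {g : G}
    (hg : g ∈ Subgroup.normalizer (H : Set G)) :
    H.map ((MulAut.conj g).toMonoidHom) = H := by
  ext x
  simp only [Subgroup.mem_map, MulEquiv.coe_toMonoidHom, MulAut.conj_apply]
  constructor
  · rintro ⟨y, hy, rfl⟩
    exact (Subgroup.mem_normalizer_iff.mp hg y).mp hy
  · intro hx
    exact ⟨g⁻¹ * x * g, by
      have := (Subgroup.mem_normalizer_iff''.mp hg x).mp hx
      simpa [mul_assoc] using this, by group⟩

private lemma mem_normalizer_sup {G : Type*} [Group G] {H K : Subgroup G} {g : G}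
    (hH : g ∈ Subgroup.normalizer (H : Set G)) (hK : g ∈ Subgroup.normalizer (K : Set G)) : g ∈ Subgroup.normalizer ((H ⊔ K : Subgroup G) : Set G) := by
  rw [Subgroup.mem_normalizer_iff]
  intro h
  constructor
  · intro hh
    have : g * h * g⁻¹ ∈ (H ⊔ K).map ((MulAut.conj g).toMonoidHom) :=
      ⟨h, hh, rfl⟩
    rwa [Subgroup.map_sup, conj_map_eq hH, conj_map_eq hK] at this
  · intro hh
    have : g * h * g⁻¹ ∈ H ⊔ K := hh
    rw [← conj_map_eq hH, ← conj_map_eq hK, ← Subgroup.map_sup] at this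
    obtain ⟨y, hy, hy2⟩ := this
    simp only [MulEquiv.coe_toMonoidHom, MulAut.conj_apply] at hy2
    have : y = h := by
      have := mul_left_cancel (mul_right_cancel hy2)
      exact this
    rwa [← this]

theorem stmt4 {G : Type*} [Group G] [Finite G] (p : ℕ) [Fact p.Prime]
    (V P K : Subgroup G) (hP : IsPGroup p P) (hPV : P ≤ V)
    (g : G) (hgV : g ∈ V) (hgP : g ∈ Subgroup.normalizer (P : Set G))
    (hKV : K ≤ V) (hKnormal : ∀ v ∈ V, ∀ k ∈ K, v * k * v⁻¹ ∈ K)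
    (hK : IsPGroup p K) (hKP : ¬ K ≤ P) :
    (IsPGroup p (P ⊔ K : Subgroup G) ∧ g ∈ Subgroup.normalizer ((P ⊔ K : Subgroup G) : Set G) ∧
        P < P ⊔ K ∧ P ⊔ K ≤ V) ∧
    (∀ Q : Subgroup G, IsPGroup p Q → P < Q → Q ≤ V → g ∈ Subgroup.normalizer (Q : Set G) →
      IsPGroup p (Q ⊔ K : Subgroup G) ∧ g ∈ Subgroup.normalizer ((Q ⊔ K : Subgroup G) : Set G) ∧
        P < Q ⊔ K ∧ Q ⊔ K ≤ V) ∧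
    (∀ Q : Subgroup G, IsPGroup p Q → P < Q → Q ≤ V → g ∈ Subgroup.normalizer (Q : Set G) →
      Q ≤ Q ⊔ K ∧ P ⊔ K ≤ Q ⊔ K) := by
  have hVnormK : ∀ {v : G}, v ∈ V → v ∈ Subgroup.normalizer (K : Set G) := by
    intro v hv
    rw [Subgroup.mem_normalizer_iff]
    intro k
    constructor
    · exact hKnormal v hv k
    · intro hk
      have := hKnormal v⁻¹ (inv_mem hv) _ hk
      simpa [mul_assoc] using this
  have key : ∀ Q : Subgroup G, IsPGroup p Q → Q ≤ V → g ∈ Subgroup.normalizer (Q : Set G) →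
      IsPGroup p (Q ⊔ K : Subgroup G) ∧ g ∈ Subgroup.normalizer ((Q ⊔ K : Subgroup G) : Set G) ∧ Q ⊔ K ≤ V := by
    intro Q hQ hQV hgQ
    refine ⟨hQ.to_sup_of_normal_right' hK (fun q hq => hVnormK (hQV hq)),
      mem_normalizer_sup hgQ (hVnormK hgV), sup_le hQV hKV⟩
  obtain ⟨h1, h2, h3⟩ := key P hP hPV hgP
  refine ⟨⟨h1, h2, lt_of_le_of_ne le_sup_left ?_, h3⟩, ?_, ?_⟩
  · intro h
    exact hKP (h ▸ le_sup_right)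
  · intro Q hQ hPQ hQV hgQ
    obtain ⟨k1, k2, k3⟩ := key Q hQ hQV hgQ
    exact ⟨k1, k2, lt_of_lt_of_le hPQ le_sup_left, k3⟩
  · intro Q hQ hPQ hQV hgQ
    exact ⟨le_sup_left, sup_le_sup_right hPQ.le K⟩
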